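/- arXiv:2305.00122 — 7 statements merged into one kernel-verified Lean document; each statement's English description precedes it below -/
import Mathlib

section
/- Let M be a matroid whose ground set E is finite, and let w : E → ℝ be injective on E. If B₁ and B₂ are both maximum-weight bases of M (i.e., each is a basis and w(B₁) ≥ w(B) and w(B₂) ≥ w(B) for every basis B of M), then B₁ = B₂. -/
open Set

private lemma key_exchange {α : Type*} (M : Matroid α) (hE : M.E.Finite)
    (w : α → ℝ) (hw : Set.InjOn w M.E)
    (B₁ B₂ : Set α) (hB₁ : M.IsBase B₁) (hB₂ : M.IsBase B₂)
    (hmax₁ : ∀ B : Set α, M.IsBase B → ∑ᶠ e ∈ B, w e ≤ ∑ᶠ e ∈ B₁, w e)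
    (e : α) (he : e ∈ B₁ \ B₂)
    (hmin : ∀ x ∈ (B₁ \ B₂) ∪ (B₂ \ B₁), w e ≤ w x) : False := by
  obtain ⟨f, hf, hBase⟩ := hB₁.exchange hB₂ he
  have hfB₁ : f ∉ B₁ := hf.2
  have hwef : w e < w f := by
    refine lt_of_le_of_ne (hmin f (Or.inr hf)) fun h => hfB₁ ?_
    have : e = f := hw (hB₁.subset_ground he.1) (hB₂.subset_ground hf.1) h
    exact this ▸ he.1
  have hfin : (B₁ \ {e}).Finite := (hE.subset hB₁.subset_ground).subset diff_subset
  have h1 : ∑ᶠ x ∈ insert f (B₁ \ {e}), w x = w f + ∑ᶠ x ∈ B₁ \ {e}, w x :=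
    finsum_mem_insert w (fun h => hfB₁ h.1) hfin
  have h2 : ∑ᶠ x ∈ B₁, w x = w e + ∑ᶠ x ∈ B₁ \ {e}, w x := by
    conv_lhs => rw [show B₁ = insert e (B₁ \ {e}) by
      rw [insert_diff_singleton, insert_eq_of_mem he.1]]
    exact finsum_mem_insert w (fun h => h.2 rfl) hfin
  have := hmax₁ _ hBase
  rw [h1, h2] at this
  linarith

/-- If the weight function is injective on the ground set of a finite matroid,
the maximum-weight basis is unique. -/
theorem max_weight_base_unique {α : Type*} (M : Matroid α) (hE : M.E.Finite)
    (w : α → ℝ) (hw : Set.InjOn w M.E)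
    (B₁ B₂ : Set α) (hB₁ : M.IsBase B₁) (hB₂ : M.IsBase B₂)
    (hmax₁ : ∀ B : Set α, M.IsBase B → ∑ᶠ e ∈ B, w e ≤ ∑ᶠ e ∈ B₁, w e)
    (hmax₂ : ∀ B : Set α, M.IsBase B → ∑ᶠ e ∈ B, w e ≤ ∑ᶠ e ∈ B₂, w e) :
    B₁ = B₂ := by
  by_contra hne
  set D : Set α := (B₁ \ B₂) ∪ (B₂ \ B₁) with hD
  have hDfin : D.Finite :=
    ((hE.subset hB₁.subset_ground).subset diff_subset).union
      ((hE.subset hB₂.subset_ground).subset diff_subset)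
  have hDne : D.Nonempty := by
    rw [Set.nonempty_iff_ne_empty]
    intro h
    apply hne
    rw [hD, union_empty_iff] at h
    exact (diff_eq_empty.mp h.1).antisymm (diff_eq_empty.mp h.2)
  obtain ⟨e, heD, hmin⟩ := hDfin.exists_minimalFor w D hDne
  have hmin' : ∀ x ∈ D, w e ≤ w x := by
    intro x hx
    rcases le_or_gt (w e) (w x) with h | h
    · exact h
    · exact hmin hx h.le
  rcases heD with he | he
  · exact absurd (key_exchange M hE w hw B₁ B₂ hB₁ hB₂ hmax₁ e he hmin') not_false
  · refine key_exchange M hE w hw B₂ B₁ hB₂ hB₁ hmax₂ e he ?_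
    exact fun x hx => hmin' x (by rw [hD, union_comm]; exact hx)
end

section
/- Let M' be a matroid whose ground set E' is finite, let e ∈ E', and let M = M' \ e be the matroid obtained from M' by deleting e. Let w : E' → ℝ be injective on E'. If B is a maximum-weight basis of M and B' is a maximum-weight basis of M', then B' \ B ⊆ {e} and B \ B' has at most one element. In other words, inserting the element e changes the maximum-weight basis by at most one element: either it stays the same, or e is added, or some element of B is replaced by e. -/
open Matroid

section Aux

variable {α : Type*}

private lemma finsum_ins (w : α → ℝ) {S : Set α} (hS : S.Finite) {x : α} (hx : x ∉ S) :
    ∑ᶠ y ∈ insert x S, w y = w x + ∑ᶠ y ∈ S, w y :=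
  finsum_mem_insert w hx hS

private lemma finsum_rem (w : α → ℝ) {S : Set α} (hS : S.Finite) {x : α} (hx : x ∈ S) :
    ∑ᶠ y ∈ S, w y = w x + ∑ᶠ y ∈ S \ {x}, w y := by
  conv_lhs => rw [← Set.insert_eq_of_mem hx, ← Set.insert_diff_singleton]
  exact finsum_ins w hS.sdiff (fun h => h.2 rfl)

/-- A maximum-weight base of a matroid with finite ground set and injective weights
is exactly the set of elements not spanned by the set of strictly heavier elements. -/
private lemma maxweight_base_eq_greedy (N : Matroid α) (hE : N.E.Finite) (w : α → ℝ)
    (hw : Set.InjOn w N.E) (B : Set α) (hB : N.IsBase B)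
    (hmax : ∀ C, N.IsBase C → ∑ᶠ x ∈ C, w x ≤ ∑ᶠ x ∈ B, w x) :
    B = {x | x ∈ N.E ∧ x ∉ N.closure {y | y ∈ N.E ∧ w x < w y}} := by
  have hBE : B ⊆ N.E := hB.subset_ground
  have hBfin : B.Finite := hE.subset hBE
  ext x
  simp only [Set.mem_setOf_eq]
  constructor
  · intro hx
    refine ⟨hBE hx, fun hcl => ?_⟩
    set H : Set α := {y | y ∈ N.E ∧ w x < w y} with hH
    have h1 : ¬ (H ⊆ N.closure (B \ {x})) := by
      intro hsub
      exact hB.indep.notMem_closure_sdiff_of_mem hx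
        (N.closure_subset_closure_of_subset_closure hsub hcl)
    obtain ⟨y, hyH, hycl⟩ := Set.not_subset.1 h1
    have hyE : y ∈ N.E := hyH.1
    have hxy : w x < w y := hyH.2
    have hyBx : y ∉ B \ {x} := fun h =>
      hycl (N.subset_closure _ (Set.diff_subset.trans hBE) h)
    have hynB : y ∉ B := by
      intro h
      exact hyBx ⟨h, fun hyx => absurd (hyx ▸ hxy) (lt_irrefl _)⟩
    have hI : N.Indep (insert y (B \ {x})) :=
      ((hB.indep.subset Set.diff_subset).insert_indep_iff_of_notMem hyBx).2 ⟨hyE, hycl⟩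
    obtain ⟨B2, hB2, hsub2, hsub2'⟩ := hI.exists_isBase_subset_union_isBase hB
    have hxB2 : x ∉ B2 := by
      intro hxB2
      have hBB2 : B ⊆ B2 := by
        intro z hz
        rcases eq_or_ne z x with rfl | hzx
        · exact hxB2
        · exact hsub2 (Set.mem_insert_of_mem _ ⟨hz, hzx⟩)
      have : B = B2 := hB.eq_of_subset_indep hB2.indep hBB2
      exact hynB (this ▸ hsub2 (Set.mem_insert _ _))
    have hB2eq : B2 = insert y (B \ {x}) := by
      apply Set.Subset.antisymm _ hsub2
      intro z hz
      rcases hsub2' hz with hz1 | hz2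
      · rcases hz1 with h | h
        · exact Or.inl h
        · exact Or.inr h
      · exact Or.inr ⟨hz2, fun hzx => hxB2 (hzx ▸ hz)⟩
    have hle := hmax B2 hB2
    rw [hB2eq, finsum_ins w hBfin.sdiff hyBx, finsum_rem w hBfin hx] at hle
    linarith
  · rintro ⟨hxE, hcl⟩
    by_contra hxB
    set H : Set α := {y | y ∈ N.E ∧ w x < w y} with hH
    set J : Set α := B ∩ H with hJ
    have hJi : N.Indep J := hB.indep.subset Set.inter_subset_left
    have hxJ : x ∉ J := fun h => hxB h.1
    have hxclJ : x ∉ N.closure J := fun h =>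
      hcl (N.closure_subset_closure Set.inter_subset_right h)
    have hIns : N.Indep (insert x J) :=
      (hJi.insert_indep_iff_of_notMem hxJ).2 ⟨hxE, hxclJ⟩
    obtain ⟨B2, hB2, hsub2, hsub2'⟩ := hIns.exists_isBase_subset_union_isBase hB
    have hxB2 : x ∈ B2 := hsub2 (Set.mem_insert _ _)
    have hB2subst : B2 ⊆ insert x B := by
      intro z hz
      rcases hsub2' hz with hz1 | hz2
      · rcases hz1 with h | h
        · exact Or.inl h
        · exact Or.inr h.1
      · exact Or.inr hz2
    have hB2B : B2 \ B = {x} := by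
      apply Set.Subset.antisymm
      · intro z hz
        rcases hB2subst hz.1 with h | h
        · exact h
        · exact absurd h hz.2
      · intro z hz
        rcases hz with rfl
        exact ⟨hxB2, hxB⟩
    have hcard : (B \ B2).encard = 1 := by
      rw [hB.encard_sdiff_comm hB2, hB2B, Set.encard_singleton]
    obtain ⟨y, hy⟩ := Set.encard_eq_one.1 hcard
    have hyB : y ∈ B := by
      have : y ∈ B \ B2 := hy ▸ rfl
      exact this.1
    have hyB2 : y ∉ B2 := by
      have : y ∈ B \ B2 := hy ▸ rfl
      exact this.2
    have hyJ : y ∉ J := fun h => hyB2 (hsub2 (Set.mem_insert_of_mem _ h))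
    have hyH : y ∉ H := fun h => hyJ ⟨hyB, h⟩
    have hyx : y ≠ x := fun h => hxB (h ▸ hyB)
    have hwyx : w y < w x := by
      have hne : w y ≠ w x := fun h => hyx (hw (hBE hyB) hxE h)
      have : ¬ (w x < w y) := fun h => hyH ⟨hBE hyB, h⟩
      exact lt_of_le_of_ne (not_lt.1 this) hne
    have hB2eq : B2 = insert x (B \ {y}) := by
      apply Set.Subset.antisymm
      · intro z hz
        rcases hB2subst hz with h | h
        · exact Or.inl h
        · refine Or.inr ⟨h, fun hzy => hyB2 ?_⟩
          rcases hzy with rfl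
          exact hz
      · intro z hz
        rcases hz with rfl | hz
        · exact hxB2
        · by_contra hzB2
          have : z ∈ B \ B2 := ⟨hz.1, hzB2⟩
          rw [hy] at this
          exact hz.2 this
    have hxBy : x ∉ B \ {y} := fun h => hxB h.1
    have hle := hmax B2 hB2
    rw [hB2eq, finsum_ins w hBfin.sdiff hxBy, finsum_rem w hBfin hyB] at hle
    linarith

/-- Closure of a restriction, for a set contained in the restriction set. -/
private lemma restrict_closure (M : Matroid α) {R X : Set α} (hR : R ⊆ M.E) (hX : X ⊆ R) :
    (M ↾ R).closure X = M.closure X ∩ R := by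
  obtain ⟨I, hI⟩ := M.exists_isBasis X (hX.trans hR)
  have hIR : (M ↾ R).IsBasis I X := (isBasis_restrict_iff hR).2 ⟨hI, hX⟩
  have hIsubR : I ⊆ R := hI.subset.trans hX
  rw [← hIR.closure_eq_closure, ← hI.closure_eq_closure]
  ext x
  rw [Set.mem_inter_iff, hIR.indep.mem_closure_iff', hI.indep.mem_closure_iff',
    restrict_ground_eq, restrict_indep_iff]
  constructor
  · rintro ⟨hxR, himp⟩
    exact ⟨⟨hR hxR, fun hind => himp ⟨hind, Set.insert_subset hxR hIsubR⟩⟩, hxR⟩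
  · rintro ⟨⟨_, himp⟩, hxR⟩
    exact ⟨hxR, fun h => himp h.1⟩

end Aux

/-- Inserting an element `e` changes the maximum-weight basis by at most one
element: if `B` is a maximum-weight basis of `M' \ e` and `B'` is a
maximum-weight basis of `M'`, then `B' \ B ⊆ {e}` and `B \ B'` has at most one
element. Here the deletion `M' \ e` is the restriction of `M'` to `M'.E \ {e}`. -/
theorem insert_changes_max_weight_base_by_at_most_one {α : Type*}
    (M' : Matroid α) (hE : M'.E.Finite) (e : α) (he : e ∈ M'.E)
    (w : α → ℝ) (hw : Set.InjOn w M'.E)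
    (B B' : Set α)
    (hB : (M' ↾ (M'.E \ {e})).IsBase B)
    (hBmax : ∀ C : Set α, (M' ↾ (M'.E \ {e})).IsBase C →
      ∑ᶠ x ∈ C, w x ≤ ∑ᶠ x ∈ B, w x)
    (hB' : M'.IsBase B')
    (hB'max : ∀ C : Set α, M'.IsBase C → ∑ᶠ x ∈ C, w x ≤ ∑ᶠ x ∈ B', w x) :
    B' \ B ⊆ {e} ∧ (B \ B').Subsingleton := by
  set R : Set α := M'.E \ {e} with hRdef
  have hRE : R ⊆ M'.E := Set.diff_subset
  have hBc' := maxweight_base_eq_greedy M' hE w hw B' hB' hB'max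
  have hBc := maxweight_base_eq_greedy (M' ↾ R) (by rw [restrict_ground_eq]; exact hE.subset hRE)
    w (by rw [restrict_ground_eq]; exact hw.mono hRE) B hB hBmax
  rw [restrict_ground_eq] at hBc
  -- notation for the "heavier" sets
  set H : α → Set α := fun x => {y | y ∈ R ∧ w x < w y} with hHdef
  set H' : α → Set α := fun x => {y | y ∈ M'.E ∧ w x < w y} with hH'def
  have hHsubR : ∀ x, H x ⊆ R := fun x y hy => hy.1
  have hclR : ∀ x, (M' ↾ R).closure (H x) = M'.closure (H x) ∩ R := fun x =>
    restrict_closure M' hRE (hHsubR x)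
  have hHH' : ∀ x, H x ⊆ H' x := fun x y hy => ⟨hRE hy.1, hy.2⟩
  -- membership facts
  have memB : ∀ x, x ∈ B ↔ x ∈ R ∧ x ∉ M'.closure (H x) := by
    intro x
    rw [hBc]
    show x ∈ R ∧ x ∉ (M' ↾ R).closure (H x) ↔ _
    rw [hclR x, Set.mem_inter_iff]
    constructor
    · rintro ⟨hxR, h⟩
      exact ⟨hxR, fun hc => h ⟨hc, hxR⟩⟩
    · rintro ⟨hxR, h⟩
      exact ⟨hxR, fun hc => h hc.1⟩
  have memB' : ∀ x, x ∈ B' ↔ x ∈ M'.E ∧ x ∉ M'.closure (H' x) := by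
    intro x; rw [hBc']; rfl
  constructor
  · -- B' \ B ⊆ {e}
    intro x hx
    by_contra hxe
    have hxe' : x ≠ e := hxe
    obtain ⟨hxE, hxcl'⟩ := (memB' x).1 hx.1
    have hxR : x ∈ R := ⟨hxE, hxe'⟩
    have hxcl : x ∈ M'.closure (H x) := by
      by_contra hc
      exact hx.2 ((memB x).2 ⟨hxR, hc⟩)
    exact hxcl' (M'.closure_subset_closure (hHH' x) hxcl)
  · -- (B \ B').Subsingleton
    -- main claim: no two distinct elements with strictly ordered weights
    have key : ∀ a ∈ B \ B', ∀ b ∈ B \ B', w a < w b → False := by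
      intro a ha b hb hab
      have hfacts : ∀ x ∈ B \ B', x ∈ R ∧ x ∉ M'.closure (H x) ∧
          e ∈ M'.closure (insert x (H x)) := by
        intro x hx
        obtain ⟨hxR, hxcl⟩ := (memB x).1 hx.1
        refine ⟨hxR, hxcl, ?_⟩
        have hxE : x ∈ M'.E := hRE hxR
        have hxcl' : x ∈ M'.closure (H' x) := by
          by_contra hc
          exact hx.2 ((memB' x).2 ⟨hxE, hc⟩)
        have hxe : x ≠ e := hxR.2
        have hwxe : w x ≠ w e := fun h => hxe (hw hxE he h)
        have hwlt : w x < w e := by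
          rcases lt_or_gt_of_ne hwxe with h | h
          · exact h
          · exfalso
            have : H' x = H x := by
              ext y
              constructor
              · rintro ⟨hyE, hy⟩
                refine ⟨⟨hyE, fun hye => ?_⟩, hy⟩
                rw [hye] at hy
                exact absurd (hy.trans h) (lt_irrefl _)
              · rintro ⟨hyR, hy⟩
                exact ⟨hRE hyR, hy⟩
            rw [this] at hxcl'
            exact hxcl hxcl'
        have hH'x : H' x = insert e (H x) := by
          ext y
          constructor
          · rintro ⟨hyE, hy⟩
            rcases eq_or_ne y e with rfl | hye
            · exact Or.inl rfl
            · exact Or.inr ⟨⟨hyE, hye⟩, hy⟩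
          · rintro (rfl | ⟨hyR, hy⟩)
            · exact ⟨he, hwlt⟩
            · exact ⟨hRE hyR, hy⟩
        rw [hH'x] at hxcl'
        exact Matroid.mem_closure_insert hxcl hxcl'
      obtain ⟨haR, hacl, -⟩ := hfacts a ha
      obtain ⟨hbR, -, hbexch⟩ := hfacts b hb
      have hsub : insert b (H b) ⊆ H a := by
        intro y hy
        rcases hy with rfl | ⟨hyR, hy⟩
        · exact ⟨hbR, hab⟩
        · exact ⟨hyR, hab.trans hy⟩
      have hecl : e ∈ M'.closure (H a) := M'.closure_subset_closure hsub hbexch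
      have haE : a ∈ M'.E := hRE haR
      have h2 : a ∈ M'.closure (H' a) := by
        by_contra hc2
        exact ha.2 ((memB' a).2 ⟨haE, hc2⟩)
      have h3 : M'.closure (insert e (H a)) = M'.closure (H a) :=
        Matroid.closure_insert_eq_of_mem_closure hecl
      have h4 : H' a ⊆ insert e (H a) := fun y hy => by
        rcases eq_or_ne y e with rfl | hye
        · exact Or.inl rfl
        · exact Or.inr ⟨⟨hy.1, hye⟩, hy.2⟩
      exact hacl (h3 ▸ (M'.closure_subset_closure h4) h2)
    intro x hx y hy
    by_contra hne
    have hwne : w x ≠ w y := fun h =>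
      hne (hw (hRE ((memB x).1 hx.1).1) (hRE ((memB y).1 hy.1).1) h)
    rcases lt_or_gt_of_ne hwne with h | h
    · exact key x hx y hy h
    · exact key y hy x hx h
end

section
/- Let M be a matroid whose ground set E is finite, let e ∈ E, and let M' = M \ e be the matroid obtained from M by deleting e. Let w : E → ℝ be injective on E. If B is a maximum-weight basis of M and B' is a maximum-weight basis of M', then B \ B' ⊆ {e} and B' \ B has at most one element. In other words, deleting the element e changes the maximum-weight basis by at most one element: either the basis stays the same, or e is removed, or e is replaced by a single other element. -/
open Matroid Set

private lemma finsum_exchange_eq {α : Type*} {w : α → ℝ} {B : Set α} (hBfin : B.Finite)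
    {y z : α} (hz : z ∈ B) (hy : y ∉ B) :
    ∑ᶠ i ∈ insert y (B \ {z}), w i = ∑ᶠ i ∈ B, w i + w y - w z := by
  have h1 : ∑ᶠ i ∈ insert y (B \ {z}), w i = w y + ∑ᶠ i ∈ B \ {z}, w i :=
    finsum_mem_insert w (fun h => hy h.1) hBfin.diff
  have h2 : ∑ᶠ i ∈ B, w i = w z + ∑ᶠ i ∈ B \ {z}, w i := by
    have h3 := finsum_mem_insert w (show z ∉ B \ {z} from fun h => h.2 rfl) hBfin.diff
    rwa [Set.insert_diff_singleton, Set.insert_eq_of_mem hz] at h3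
  rw [h1, h2]; ring

private lemma mem_closure_iff_of_indep {α : Type*} (M : Matroid α) {I : Set α}
    (hI : M.Indep I) {x : α} (hx : x ∈ M.E) :
    x ∈ M.closure I ↔ (x ∈ I ∨ ¬ M.Indep (insert x I)) := by
  by_cases hxI : x ∈ I
  · simp only [hxI, true_or, iff_true]
    exact M.subset_closure I hI.subset_ground hxI
  · rw [hI.insert_indep_iff_of_notMem hxI]
    simp [hxI, hx]

private lemma mem_restrict_closure_iff {α : Type*} (M : Matroid α) {R X : Set α}
    (hXR : X ⊆ R) (hR : R ⊆ M.E) {x : α} (hx : x ∈ R) :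
    x ∈ (M ↾ R).closure X ↔ x ∈ M.closure X := by
  obtain ⟨I, hI⟩ := M.exists_isBasis X (hXR.trans hR)
  have hI' : (M ↾ R).IsBasis I X := hI.isBasis_restrict_of_subset hXR
  have hIR : I ⊆ R := hI.subset.trans hXR
  rw [← hI.closure_eq_closure, ← hI'.closure_eq_closure,
    mem_closure_iff_of_indep M hI.indep (hR hx),
    mem_closure_iff_of_indep (M ↾ R) hI'.indep (by simpa using hx)]
  simp only [restrict_indep_iff]
  constructor
  · rintro (h | h)
    · exact Or.inl h
    · exact Or.inr fun h' => h ⟨h', insert_subset hx hIR⟩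
  · rintro (h | h)
    · exact Or.inl h
    · exact Or.inr fun h' => h h'.1

/-- With weights injective on the ground set, an element of the ground set belongs to a
maximum-weight base iff it is not in the closure of the set of strictly heavier elements. -/
private lemma mem_max_weight_base_iff {α : Type*} (M : Matroid α) (hE : M.E.Finite)
    (w : α → ℝ) (hw : Set.InjOn w M.E) {B : Set α} (hB : M.IsBase B)
    (hBmax : ∀ C : Set α, M.IsBase C → ∑ᶠ x ∈ C, w x ≤ ∑ᶠ x ∈ B, w x)
    {x : α} (hx : x ∈ M.E) :
    x ∈ B ↔ x ∉ M.closure {y | y ∈ M.E ∧ w x < w y} := by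
  classical
  set S : Set α := {y | y ∈ M.E ∧ w x < w y} with hS
  have hSE : S ⊆ M.E := fun y hy => hy.1
  have hBfin : B.Finite := hE.subset hB.subset_ground
  constructor
  · intro hxB hxcl
    -- find y ∈ S with y ∉ closure (B \ {x})
    have hxncl : x ∉ M.closure (B \ {x}) :=
      hB.indep.notMem_closure_diff_of_mem hxB
    have : ¬ (S ⊆ M.closure (B \ {x})) := by
      intro hsub
      exact hxncl (M.closure_subset_closure_of_subset_closure hsub hxcl)
    obtain ⟨y, hyS, hyncl⟩ := not_subset.1 this
    have hyB : y ∉ B := by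
      intro hyB
      have hyx : y ≠ x := fun h => lt_irrefl _ (h ▸ hyS.2)
      exact hyncl (M.subset_closure (B \ {x}) (diff_subset.trans hB.subset_ground) ⟨hyB, hyx⟩)
    have hind : M.Indep (insert y (B \ {x})) := by
      rw [(hB.indep.diff {x}).insert_indep_iff_of_notMem (fun h => hyB h.1)]
      exact ⟨hyS.1, hyncl⟩
    have hbase : M.IsBase (insert y (B \ {x})) := hB.exchange_isBase_of_indep hyB hind
    have := hBmax _ hbase
    rw [finsum_exchange_eq hBfin hxB hyB] at this
    have : w y ≤ w x := by linarith
    exact absurd hyS.2 (not_lt.2 this)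
  · intro hxcl
    by_contra hxB
    set K : Set α := B ∩ S with hK
    have hKS : K ⊆ S := inter_subset_right
    have hxclB : x ∈ M.closure B := hB.closure_eq ▸ hx
    -- take a minimal Finset s ⊆ B \ S with x ∈ closure (K ∪ s)
    set L : Set α := B \ S with hL
    have hLfin : L.Finite := hBfin.diff
    set Lf : Finset α := hLfin.toFinset with hLf
    set T : Finset (Finset α) := Lf.powerset.filter (fun s => x ∈ M.closure (K ∪ ↑s)) with hT
    have hTne : T.Nonempty := by
      refine ⟨Lf, Finset.mem_filter.2 ⟨Finset.mem_powerset_self _, ?_⟩⟩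
      have : K ∪ (↑Lf : Set α) = B := by
        rw [hLf, Set.Finite.coe_toFinset, hK, hL, Set.inter_union_diff]
      rwa [this]
    obtain ⟨s, hsT, hsmin⟩ := T.exists_min_image Finset.card hTne
    have hsL : (↑s : Set α) ⊆ L := by
      have := (Finset.mem_filter.1 hsT).1
      rw [Finset.mem_powerset] at this
      intro a ha
      exact hLfin.mem_toFinset.1 (this ha)
    have hscl : x ∈ M.closure (K ∪ ↑s) := (Finset.mem_filter.1 hsT).2
    have hsne : s.Nonempty := by
      rcases s.eq_empty_or_nonempty with h | h
      · exfalso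
        rw [h] at hscl
        simp only [Finset.coe_empty, Set.union_empty] at hscl
        exact hxcl (M.closure_subset_closure hKS hscl)
      · exact h
    obtain ⟨y, hys⟩ := hsne
    have hyL : y ∈ L := hsL hys
    have hyB : y ∈ B := hyL.1
    have hyx : y ≠ x := fun h => hxB (h ▸ hyB)
    have hwyx : w y < w x := by
      have h1 : ¬ (w x < w y) := fun h => hyL.2 ⟨hB.subset_ground hyB, h⟩
      have h2 : w y ≠ w x := fun h => hyx (hw (hB.subset_ground hyB) hx h)
      exact lt_of_le_of_ne (not_lt.1 h1) h2
    have hyK : y ∉ K := fun h => hyL.2 (hKS h)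
    -- minimality: x ∉ closure (K ∪ ↑(s.erase y))
    have hxncl : x ∉ M.closure (K ∪ ↑(s.erase y)) := by
      intro hmem
      have hmemT : s.erase y ∈ T := Finset.mem_filter.2
        ⟨Finset.mem_powerset.2 (fun a ha => Finset.mem_powerset.1
          (Finset.mem_filter.1 hsT).1 (s.erase_subset y ha)), hmem⟩
      have := hsmin _ hmemT
      have hlt : (s.erase y).card < s.card := Finset.card_erase_lt_of_mem hys
      omega
    -- closure exchange
    have hset : K ∪ (↑s : Set α) = insert y (K ∪ ↑(s.erase y)) := by
      ext a
      simp only [Set.mem_union, Finset.coe_erase, Set.mem_insert_iff, Set.mem_diff,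
        Set.mem_singleton_iff, Finset.mem_coe]
      constructor
      · rintro (h | h)
        · exact Or.inr (Or.inl h)
        · by_cases hay : a = y
          · exact Or.inl hay
          · exact Or.inr (Or.inr ⟨h, hay⟩)
      · rintro (rfl | h | h)
        · exact Or.inr hys
        · exact Or.inl h
        · exact Or.inr h.1
    rw [hset] at hscl
    have hex : y ∈ M.closure (insert x (K ∪ ↑(s.erase y))) \ M.closure (K ∪ ↑(s.erase y)) :=
      M.closure_exchange ⟨hscl, hxncl⟩
    -- insert x (B \ {y}) is independent
    have hsubBy : insert x (K ∪ ↑(s.erase y)) ⊆ insert x (B \ {y}) := by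
      apply Set.insert_subset_insert
      rintro a (h | h)
      · exact ⟨h.1, fun hay => hyK (hay ▸ h)⟩
      · have haL : a ∈ L := hsL (s.erase_subset y h)
        exact ⟨haL.1, fun hay => (Finset.notMem_erase y s) (hay ▸ h)⟩
    have hxnclBy : x ∉ M.closure (B \ {y}) := by
      intro hmem
      have h1 : M.closure (insert x (B \ {y})) = M.closure (B \ {y}) :=
        M.closure_insert_eq_of_mem_closure hmem
      have h2 : y ∈ M.closure (B \ {y}) := by
        have := M.closure_subset_closure hsubBy hex.1
        rwa [h1] at this
      exact hB.indep.notMem_closure_diff_of_mem hyB h2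
    have hind : M.Indep (insert x (B \ {y})) := by
      rw [(hB.indep.diff {y}).insert_indep_iff_of_notMem (fun h => hxB h.1)]
      exact ⟨hx, hxnclBy⟩
    have hbase : M.IsBase (insert x (B \ {y})) := hB.exchange_isBase_of_indep hxB hind
    have := hBmax _ hbase
    rw [finsum_exchange_eq hBfin hyB hxB] at this
    linarith

/-- Deleting an element `e` changes the maximum-weight basis by at most one
element: if `B` is a maximum-weight basis of `M` and `B'` is a maximum-weight
basis of `M \ e`, then `B \ B' ⊆ {e}` and `B' \ B` has at most one element.
Here the deletion `M \ e` is the restriction of `M` to `M.E \ {e}`. -/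
theorem delete_changes_max_weight_base_by_at_most_one {α : Type*}
    (M : Matroid α) (hE : M.E.Finite) (e : α) (he : e ∈ M.E)
    (w : α → ℝ) (hw : Set.InjOn w M.E)
    (B B' : Set α)
    (hB : M.IsBase B)
    (hBmax : ∀ C : Set α, M.IsBase C → ∑ᶠ x ∈ C, w x ≤ ∑ᶠ x ∈ B, w x)
    (hB' : (M ↾ (M.E \ {e})).IsBase B')
    (hB'max : ∀ C : Set α, (M ↾ (M.E \ {e})).IsBase C →
      ∑ᶠ x ∈ C, w x ≤ ∑ᶠ x ∈ B', w x) :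
    B \ B' ⊆ {e} ∧ (B' \ B).Subsingleton := by
  set M' : Matroid α := M ↾ (M.E \ {e}) with hM'
  have hE' : M'.E = M.E \ {e} := rfl
  have hRE : M.E \ {e} ⊆ M.E := diff_subset
  have hE'fin : M'.E.Finite := hE.subset (hE' ▸ hRE)
  have hw' : Set.InjOn w M'.E := hw.mono (hE' ▸ hRE)
  -- notation for heavier-element sets
  set S : α → Set α := fun x => {y | y ∈ M.E ∧ w x < w y} with hSdef
  have hSdiff : ∀ x, {y | y ∈ M'.E ∧ w x < w y} = S x \ {e} := by
    intro x
    ext a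
    simp only [hE', hSdef, Set.mem_setOf_eq, Set.mem_diff, Set.mem_singleton_iff]
    tauto
  have hmem : ∀ x ∈ M.E, (x ∈ B ↔ x ∉ M.closure (S x)) :=
    fun x hx => mem_max_weight_base_iff M hE w hw hB hBmax hx
  have hmem' : ∀ x ∈ M.E \ {e}, (x ∈ B' ↔ x ∉ M.closure (S x \ {e})) := by
    intro x hx
    have h1 := mem_max_weight_base_iff M' hE'fin w hw' hB' hB'max (x := x) (hE' ▸ hx)
    rw [hSdiff x] at h1
    rw [h1]
    have h2 : x ∈ M'.closure (S x \ {e}) ↔ x ∈ M.closure (S x \ {e}) :=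
      mem_restrict_closure_iff M (show S x \ {e} ⊆ M.E \ {e} from fun y hy => ⟨hy.1.1, hy.2⟩) hRE hx
    rw [h2]
  constructor
  · -- B \ B' ⊆ {e}
    rintro x ⟨hxB, hxB'⟩
    by_contra hne
    have hxE : x ∈ M.E := hB.subset_ground hxB
    have hxE' : x ∈ M.E \ {e} := ⟨hxE, hne⟩
    have h1 : x ∉ M.closure (S x) := (hmem x hxE).1 hxB
    have h2 : x ∈ M.closure (S x \ {e}) := by
      by_contra h
      exact hxB' ((hmem' x hxE').2 h)
    exact h1 (M.closure_subset_closure diff_subset h2)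
  · -- B' \ B subsingleton
    have hB'E : B' ⊆ M.E \ {e} := hE' ▸ hB'.subset_ground
    have key : ∀ a b : α, a ∈ B' \ B → b ∈ B' \ B → w b < w a → False := by
      rintro a b ⟨haB', haB⟩ ⟨hbB', hbB⟩ hab
      have haE' : a ∈ M.E \ {e} := hB'E haB'
      have hbE' : b ∈ M.E \ {e} := hB'E hbB'
      have ha1 : a ∈ M.closure (S a) := by
        by_contra h; exact haB ((hmem a haE'.1).2 h)
      have ha2 : a ∉ M.closure (S a \ {e}) := (hmem' a haE').1 haB'
      have hb2 : b ∉ M.closure (S b \ {e}) := (hmem' b hbE').1 hbB'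
      have hb1 : b ∈ M.closure (S b) := by
        by_contra h; exact hbB ((hmem b hbE'.1).2 h)
      -- e must be in S a, otherwise contradiction immediately
      have heSa : e ∈ S a := by
        by_contra h
        have : S a \ {e} = S a := Set.diff_singleton_eq_self h
        rw [this] at ha2
        exact ha2 ha1
      have hSa : S a = insert e (S a \ {e}) := by
        rw [Set.insert_diff_singleton, Set.insert_eq_of_mem heSa]
      rw [hSa] at ha1
      have hex : e ∈ M.closure (insert a (S a \ {e})) \ M.closure (S a \ {e}) :=
        M.closure_exchange ⟨ha1, ha2⟩
      have hsub : insert a (S a \ {e}) ⊆ S b \ {e} := by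
        intro y hy
        rcases Set.mem_insert_iff.1 hy with rfl | hy'
        · exact ⟨⟨haE'.1, hab⟩, haE'.2⟩
        · obtain ⟨⟨hyE, hyw⟩, hyne⟩ := hy'
          exact ⟨⟨hyE, hab.trans hyw⟩, hyne⟩
      have heclb : e ∈ M.closure (S b \ {e}) :=
        M.closure_subset_closure hsub hex.1
      -- then closure (S b) = closure (S b \ {e}), contradicting hb1/hb2
      by_cases heSb : e ∈ S b
      · have hSb : S b = insert e (S b \ {e}) := by
          rw [Set.insert_diff_singleton, Set.insert_eq_of_mem heSb]
        rw [hSb, M.closure_insert_eq_of_mem_closure heclb] at hb1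
        exact hb2 hb1
      · rw [Set.diff_singleton_eq_self heSb] at hb2
        exact hb2 hb1
    rintro x ⟨hxB', hxB⟩ y ⟨hyB', hyB⟩
    rcases lt_trichotomy (w x) (w y) with h | h | h
    · exact absurd (key y x ⟨hyB', hyB⟩ ⟨hxB', hxB⟩ h) (fun h => h)
    · exact hw (hB'E hxB').1 (hB'E hyB').1 h
    · exact absurd (key x y ⟨hxB', hxB⟩ ⟨hyB', hyB⟩ h) (fun h => h)
end

section
/- Let M be a matroid whose ground set is finite, and let B₁ and B₂ be bases of M. Then there exists a bijection φ : B₁ \ B₂ → B₂ \ B₁ such that for every e ∈ B₁ \ B₂, the set (B₂ \ {φ(e)}) ∪ {e} is a basis of M. -/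
open Set

/-- Auxiliary: an element outside a finite base lies in the closure of the set of
elements of the base with which it can be exchanged (keeping independence). -/
lemma aux_mem_closure_exchangeable {α : Type*} (M : Matroid α) {B : Set α} (hB : M.IsBase B)
    (hBfin : B.Finite) {e : α} (heE : e ∈ M.E) (heB : e ∉ B) :
    e ∈ M.closure {f ∈ B | M.Indep (insert e (B \ {f}))} := by
  set D := {f ∈ B | M.Indep (insert e (B \ {f}))} with hD
  have key : ∀ n (Y : Set α), Y ⊆ B → Y.ncard ≤ n → e ∈ M.closure Y → e ∈ M.closure D := by
    intro n
    induction n with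
    | zero =>
      intro Y hYB hcard heY
      have hYfin : Y.Finite := hBfin.subset hYB
      have : Y = ∅ := by
        rw [← Set.ncard_eq_zero hYfin]; omega
      subst this
      exact M.closure_subset_closure (empty_subset _) heY
    | succ n ih =>
      intro Y hYB hcard heY
      by_cases hstep : ∃ f ∈ Y, e ∈ M.closure (Y \ {f})
      · obtain ⟨f, hfY, hf⟩ := hstep
        refine ih (Y \ {f}) ((diff_subset).trans hYB) ?_ hf
        have hYfin : Y.Finite := hBfin.subset hYB
        have := Set.ncard_diff_singleton_lt_of_mem hfY hYfin
        omega
      · push_neg at hstep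
        -- every element of Y is exchangeable with e
        have hYD : Y ⊆ D := by
          intro f hfY
          refine ⟨hYB hfY, ?_⟩
          have hBf : M.Indep (B \ {f}) := hB.indep.subset diff_subset
          rw [hBf.insert_indep_iff_of_notMem (fun h => heB h.1)]
          refine ⟨heE, fun hecl => ?_⟩
          -- closure exchange on Y \ {f}
          have h1 : e ∈ M.closure (insert f (Y \ {f})) \ M.closure (Y \ {f}) := by
            rw [insert_diff_singleton, insert_eq_of_mem hfY]
            exact ⟨heY, hstep f hfY⟩
          have h2 := Matroid.closure_exchange h1
          have h3 : f ∈ M.closure (insert e (B \ {f})) := by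
            refine M.closure_subset_closure ?_ h2.1
            exact insert_subset_insert (diff_subset_diff_left hYB)
          rw [Matroid.closure_insert_eq_of_mem_closure hecl] at h3
          exact hB.indep.notMem_closure_sdiff_of_mem (hYB hfY) h3
        exact M.closure_subset_closure hYD heY
  refine key B.ncard B subset_rfl le_rfl ?_
  rw [hB.closure_eq]; exact heE

/-- Auxiliary: an independent set contained in the closure of another independent set
has at most its cardinality. -/
lemma aux_encard_le {α : Type*} (M : Matroid α) {I X : Set α} (hI : M.Indep I)
    (hX : M.Indep X) (hIX : I ⊆ M.closure X) : I.encard ≤ X.encard := by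
  obtain ⟨J, hJ, hIJ⟩ := hI.subset_isBasis_of_subset hIX (M.closure_subset_ground X)
  calc I.encard ≤ J.encard := Set.encard_mono hIJ
    _ = X.encard := hJ.encard_eq_encard hX.isBasis_closure

/-- Strong basis exchange bijection: for bases `B₁, B₂` of a finite matroid
there is a bijection `φ : B₁ \ B₂ → B₂ \ B₁` such that for every `e ∈ B₁ \ B₂`,
the set `(B₂ \ {φ e}) ∪ {e}` is a basis. -/
theorem base_exchange_bijection {α : Type*} (M : Matroid α) (hE : M.E.Finite)
    (B₁ B₂ : Set α) (hB₁ : M.IsBase B₁) (hB₂ : M.IsBase B₂) :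
    ∃ φ : (B₁ \ B₂ : Set α) → (B₂ \ B₁ : Set α), Function.Bijective φ ∧
      ∀ e : (B₁ \ B₂ : Set α), M.IsBase (insert (e : α) (B₂ \ {(φ e : α)})) := by
  classical
  have hB₁fin : B₁.Finite := hE.subset hB₁.subset_ground
  have hB₂fin : B₂.Finite := hE.subset hB₂.subset_ground
  have hSfin : (B₁ \ B₂).Finite := hB₁fin.sdiff
  have hTfin : (B₂ \ B₁).Finite := hB₂fin.sdiff
  haveI : Fintype (B₁ \ B₂ : Set α) := hSfin.fintype
  haveI : Fintype (B₂ \ B₁ : Set α) := hTfin.fintype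
  set t : (B₁ \ B₂ : Set α) → Finset α :=
    fun e => hTfin.toFinset.filter (fun f => M.IsBase (insert (e : α) (B₂ \ {f}))) with ht
  have hall : ∀ s : Finset (B₁ \ B₂ : Set α), s.card ≤ (s.biUnion t).card := by
    intro s
    set N : Set α := ↑(s.biUnion t) with hN
    set X : Set α := (B₁ ∩ B₂) ∪ N with hX
    set I : Set α := (B₁ ∩ B₂) ∪ (Subtype.val '' (↑s : Set (B₁ \ B₂ : Set α))) with hI
    have hNsub : N ⊆ B₂ \ B₁ := by
      intro f hf
      simp only [hN, Finset.mem_coe, Finset.mem_biUnion, ht, Finset.mem_filter,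
        hTfin.mem_toFinset] at hf
      obtain ⟨e, -, hf, -⟩ := hf
      exact hf
    have hXB₂ : X ⊆ B₂ := union_subset (inter_subset_right) (hNsub.trans diff_subset)
    have hIB₁ : I ⊆ B₁ := union_subset (inter_subset_left)
      (by rintro _ ⟨⟨x, hx⟩, _, rfl⟩; exact hx.1)
    have hXindep : M.Indep X := hB₂.indep.subset hXB₂
    have hIindep : M.Indep I := hB₁.indep.subset hIB₁
    -- I ⊆ closure X
    have hIclX : I ⊆ M.closure X := by
      rintro x (hx | ⟨⟨e, he⟩, hes, rfl⟩)
      · exact M.subset_closure X (hXindep.subset_ground) (Or.inl hx)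
      · have hecl := aux_mem_closure_exchangeable M hB₂ hB₂fin
          (hB₁.subset_ground he.1) he.2
        refine M.closure_subset_closure ?_ hecl
        rintro f ⟨hfB₂, hfind⟩
        by_cases hfB₁ : f ∈ B₁
        · exact Or.inl ⟨hfB₁, hfB₂⟩
        · refine Or.inr ?_
          have hbase : M.IsBase (insert e (B₂ \ {f})) :=
            hB₂.exchange_isBase_of_indep he.2 hfind
          simp only [hN, Finset.mem_coe, Finset.mem_biUnion]
          exact ⟨⟨e, he⟩, Finset.mem_coe.1 hes,
            Finset.mem_filter.2 ⟨hTfin.mem_toFinset.2 ⟨hfB₂, hfB₁⟩, hbase⟩⟩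
    have hcard := aux_encard_le M hIindep hXindep hIclX
    -- split the cardinalities
    have hIcard : I.encard = (B₁ ∩ B₂).encard + (Subtype.val '' (↑s : Set (B₁ \ B₂ : Set α))).encard := by
      rw [hI, Set.encard_union_eq]
      rw [Set.disjoint_left]
      rintro x hx ⟨⟨y, hy⟩, _, rfl⟩
      exact hy.2 hx.2
    have hXcard : X.encard ≤ (B₁ ∩ B₂).encard + N.encard := by
      rw [hX]; exact Set.encard_union_le _ _
    have hfin : (B₁ ∩ B₂).encard ≠ ⊤ :=
      ((hB₁fin.subset inter_subset_left).encard_lt_top).ne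
    have hmain : (Subtype.val '' (↑s : Set (B₁ \ B₂ : Set α))).encard ≤ N.encard := by
      rw [hIcard] at hcard
      have := hcard.trans hXcard
      exact (WithTop.add_le_add_iff_left hfin).1 this
    have h1 : (Subtype.val '' (↑s : Set (B₁ \ B₂ : Set α))).encard = s.card := by
      rw [Subtype.val_injective.encard_image,
        Set.encard_coe_eq_coe_finsetCard]
    have h2 : N.encard = (s.biUnion t).card := Set.encard_coe_eq_coe_finsetCard _
    rw [h1, h2] at hmain
    exact_mod_cast hmain
  obtain ⟨f, hfinj, hft⟩ := (Finset.all_card_le_biUnion_card_iff_exists_injective t).1 hall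
  have hmem : ∀ e, f e ∈ B₂ \ B₁ ∧ M.IsBase (insert (e : α) (B₂ \ {f e})) := by
    intro e
    have := hft e
    rw [ht, Finset.mem_filter, hTfin.mem_toFinset] at this
    exact this
  refine ⟨fun e => ⟨f e, (hmem e).1⟩, ?_, fun e => (hmem e).2⟩
  rw [Fintype.bijective_iff_injective_and_card]
  constructor
  · intro a b hab
    exact hfinj (congrArg Subtype.val hab)
  · have hcard := hB₁.encard_sdiff_comm hB₂
    rw [hSfin.encard_eq_coe_toFinset_card, hTfin.encard_eq_coe_toFinset_card] at hcard
    have : hSfin.toFinset.card = hTfin.toFinset.card := by exact_mod_cast hcard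
    simpa [Set.Finite.card_toFinset] using this
end

section
/- For every integer k ≥ 1 and every real number ε > 0, it holds that ε·(1+ε)^k / ((1+ε)^k − 1) ≤ ε + 1/k. -/
/-- For every integer `k ≥ 1` and real `ε > 0`,
`ε (1+ε)^k / ((1+ε)^k − 1) ≤ ε + 1/k`. -/
theorem eps_pow_ratio_le (k : ℕ) (hk : 1 ≤ k) (ε : ℝ) (hε : 0 < ε) :
    ε * (1 + ε) ^ k / ((1 + ε) ^ k - 1) ≤ ε + 1 / (k : ℝ) := by
  have hk' : (1 : ℝ) ≤ k := by exact_mod_cast hk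
  have hb : 1 + (k : ℝ) * ε ≤ (1 + ε) ^ k := one_add_mul_le_pow (by linarith) k
  have hpos : 0 < (1 + ε) ^ k - 1 := by nlinarith
  rw [div_le_iff₀ hpos]
  have hkpos : (0 : ℝ) < k := by linarith
  have h1 : (1 / (k : ℝ)) * k = 1 := by field_simp
  nlinarith [mul_le_mul_of_nonneg_left hb (le_of_lt (one_div_pos.mpr hkpos))]
end

section
/- Let G = (V, E) be a finite simple graph and let w : E → ℝ be injective on the edge set (all edge weights pairwise distinct). For each vertex v with at least one incident edge, let f(v) be the edge incident to v of maximum weight, and let F = { f(v) : v ∈ V, v not isolated }. Then F is acyclic: the subgraph of G with edge set F contains no cycle. -/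
private lemma first_edge_mem_edges {V : Type*} {G : SimpleGraph V} {x y : V}
    {p : G.Walk x y} (hp : ¬ p.Nil) : s(x, p.getVert 1) ∈ p.edges := by
  cases p with
  | nil => simp at hp
  | cons h q => simp

/-- If each non-isolated vertex `v` of a finite simple graph with pairwise
distinct edge weights selects its maximum-weight incident edge `f v`, then the
set `F` of selected edges is acyclic. -/
theorem max_incident_edges_acyclic {V : Type*} [Fintype V] (G : SimpleGraph V)
    (w : Sym2 V → ℝ) (hw : Set.InjOn w G.edgeSet)
    (f : V → Sym2 V)
    (hf : ∀ v : V, (G.incidenceSet v).Nonempty →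
      f v ∈ G.incidenceSet v ∧ ∀ e ∈ G.incidenceSet v, w e ≤ w (f v)) :
    (SimpleGraph.fromEdgeSet
      {e : Sym2 V | ∃ v : V, (G.incidenceSet v).Nonempty ∧ e = f v}).IsAcyclic := by
  classical
  set F : Set (Sym2 V) := {e : Sym2 V | ∃ v : V, (G.incidenceSet v).Nonempty ∧ e = f v} with hF
  intro u0 p hp
  have hmemF : ∀ {a b : V}, (SimpleGraph.fromEdgeSet F).Adj a b → s(a, b) ∈ F := by
    intro a b hab
    rw [SimpleGraph.fromEdgeSet_adj] at hab
    exact hab.1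
  have hFG : ∀ e ∈ F, e ∈ G.edgeSet := by
    rintro e ⟨v, hv, rfl⟩
    exact G.incidenceSet_subset v (hf v hv).1
  -- choose a minimum-weight edge of the cycle
  have hpne : p.edges ≠ [] := by
    intro h
    have h3 := hp.three_le_length
    have := p.length_edges
    rw [h] at this
    simp at this
    omega
  have hne : p.edges.toFinset.Nonempty :=
    ⟨p.edges.head hpne, List.mem_toFinset.2 (List.head_mem hpne)⟩
  obtain ⟨e, heF', hmin⟩ := p.edges.toFinset.exists_min_image w hne
  have hep : e ∈ p.edges := List.mem_toFinset.1 heF'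
  have heF : e ∈ F := by
    have := p.edges_subset_edgeSet hep
    rw [SimpleGraph.edgeSet_fromEdgeSet] at this
    exact this.1
  obtain ⟨v, hv, hev⟩ := heF
  have hvmem : v ∈ e := by rw [hev]; exact (hf v hv).1.2
  -- key: any edge of the cycle in F incident to v equals e
  have key : ∀ e' ∈ F, e' ∈ p.edges → v ∈ e' → e' = e := by
    intro e' he'F he'p hve'
    have h1 : e' ∈ G.incidenceSet v := ⟨hFG e' he'F, hve'⟩
    have h2 : w e' ≤ w e := by rw [hev]; exact (hf v hv).2 e' h1
    have h3 : w e ≤ w e' := hmin e' (List.mem_toFinset.2 he'p)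
    exact hw (hFG e' he'F) (hFG e ⟨v, hv, hev⟩) (le_antisymm h2 h3)
  -- rotate the cycle to start at v
  obtain ⟨y, hey⟩ := Sym2.mem_iff_exists.mp hvmem
  have hvs : v ∈ p.support := p.fst_mem_support_of_mem_edges (hey ▸ hep)
  have hq : (p.rotate v hvs).IsCycle := hp.rotate hvs
  have hqe : ∀ e', e' ∈ (p.rotate v hvs).edges ↔ e' ∈ p.edges :=
    fun e' => (p.rotate_edges v hvs).perm.mem_iff
  revert hq hqe
  generalize p.rotate v hvs = q
  intro hq hqe
  cases q with
  | nil => exact hq.ne_nil rfl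
  | cons hadj q' =>
    rename_i b
    -- first edge of the rotated cycle
    have he1F : s(v, b) ∈ F := hmemF hadj
    have he1q : s(v, b) ∈ (SimpleGraph.Walk.cons hadj q').edges := by simp
    -- last edge of the rotated cycle
    have h3 := hq.three_le_length
    have hq'nil : ¬ q'.Nil := by
      rw [SimpleGraph.Walk.nil_iff_length_eq]
      simp only [SimpleGraph.Walk.length_cons] at h3
      omega
    have hrnil : ¬ q'.reverse.Nil := by
      rw [SimpleGraph.Walk.nil_iff_length_eq, SimpleGraph.Walk.length_reverse]
      rw [SimpleGraph.Walk.nil_iff_length_eq] at hq'nil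
      exact hq'nil
    have hadj2 : (SimpleGraph.fromEdgeSet F).Adj v (q'.reverse.getVert 1) :=
      q'.reverse.adj_snd hrnil
    set c : V := q'.reverse.getVert 1 with hc
    have he2F : s(v, c) ∈ F := hmemF hadj2
    have he2r : s(v, c) ∈ q'.reverse.edges := first_edge_mem_edges hrnil
    have he2q' : s(v, c) ∈ q'.edges := by
      rw [SimpleGraph.Walk.edges_reverse, List.mem_reverse] at he2r
      exact he2r
    have he2q : s(v, c) ∈ (SimpleGraph.Walk.cons hadj q').edges := by
      simp [he2q']
    -- both equal e, contradiction with nodup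
    have hnodup := hq.isCircuit.isTrail.edges_nodup
    simp only [SimpleGraph.Walk.edges_cons, List.nodup_cons] at hnodup
    have h1 : s(v, b) = e := key _ he1F ((hqe _).mp he1q) (Sym2.mem_mk_left _ _)
    have h2 : s(v, c) = e := key _ he2F ((hqe _).mp he2q) (Sym2.mem_mk_left _ _)
    exact hnodup.1 (h1 ▸ h2 ▸ he2q')
end

section
/- Let ε > 0 be a real number, let j and j* be integers with j ≤ j*, let s ≥ 1 be an integer, and let a_0, a_1, …, a_s be real numbers such that a_0 = (1+ε)^{j*}, a_i ≥ a_{i−1}/(1+ε) for all 1 ≤ i ≤ s, and a_{s−1} = (1+ε)^j. Then Σ_{i=1}^{s} a_i ≥ Σ_{i=j}^{j*−1} (1+ε)^i = ((1+ε)^{j*} − (1+ε)^j)/ε. -/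
/-- If `a 0 = (1+ε)^{j*}`, each `a i` is at least `a (i-1) / (1+ε)`, and
`a (s-1) = (1+ε)^j`, then `∑_{i=1}^{s} a i` is at least the geometric sum
`∑_{i=j}^{j*-1} (1+ε)^i = ((1+ε)^{j*} − (1+ε)^j)/ε`. -/
theorem decreasing_path_weight_bound (ε : ℝ) (hε : 0 < ε)
    (j jstar : ℤ) (hj : j ≤ jstar) (s : ℕ) (hs : 1 ≤ s) (a : ℕ → ℝ)
    (ha0 : a 0 = (1 + ε) ^ jstar)
    (hstep : ∀ i : ℕ, 1 ≤ i → i ≤ s → a (i - 1) / (1 + ε) ≤ a i)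
    (hlast : a (s - 1) = (1 + ε) ^ j) :
    (∑ i ∈ Finset.Icc 1 s, a i ≥ ∑ i ∈ Finset.Ico j jstar, (1 + ε) ^ i) ∧
      ∑ i ∈ Finset.Ico j jstar, (1 + ε) ^ i
        = ((1 + ε) ^ jstar - (1 + ε) ^ j) / ε := by
  have h1ε : (0:ℝ) < 1 + ε := by linarith
  have h1ε' : (1:ℝ) < 1 + ε := by linarith
  -- lower bound on each a i
  have hlow : ∀ i : ℕ, i ≤ s → (1 + ε) ^ (jstar - (i:ℤ)) ≤ a i := by
    intro i
    induction i with
    | zero => intro _; simp [ha0]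
    | succ i ih =>
      intro his
      have h1 : (1 + ε) ^ (jstar - (i:ℤ)) ≤ a i := ih (Nat.le_of_succ_le his)
      have h2 := hstep (i+1) (Nat.le_add_left 1 i) his
      simp only [Nat.add_sub_cancel] at h2
      have h3 : (1 + ε) ^ (jstar - (i:ℤ)) / (1 + ε) ≤ a i / (1 + ε) := by gcongr
      calc (1 + ε) ^ (jstar - ((i:ℤ)+1)) = (1 + ε) ^ (jstar - (i:ℤ)) / (1 + ε) := by
            rw [show jstar - ((i:ℤ)+1) = (jstar - (i:ℤ)) - 1 by ring,
              zpow_sub_one₀ (ne_of_gt h1ε), div_eq_mul_inv]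
        _ ≤ a i / (1 + ε) := h3
        _ ≤ a (i+1) := h2
  -- geometric sum formula
  have geom : ∀ m : ℤ, j ≤ m →
      ∑ i ∈ Finset.Ico j m, (1 + ε) ^ i = ((1 + ε) ^ m - (1 + ε) ^ j) / ε := by
    intro m hm
    refine Int.le_induction (motive := fun m _ => ∑ i ∈ Finset.Ico j m, (1 + ε) ^ i = ((1 + ε) ^ m - (1 + ε) ^ j) / ε) ?_ ?_ m hm
    · simp
    · intro m hm ih
      have hins : Finset.Ico j (m + 1) = insert m (Finset.Ico j m) := by
        ext x; simp only [Finset.mem_Ico, Finset.mem_insert]; omega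
      rw [hins, Finset.sum_insert (by simp), ih, zpow_add_one₀ (ne_of_gt h1ε)]
      field_simp
      ring
  refine ⟨?_, geom jstar hj⟩
  -- s is large enough
  set n : ℕ := (jstar - j).toNat with hn
  have hsub : ((s - 1 : ℕ) : ℤ) = (s:ℤ) - 1 := by
    have := Nat.cast_sub hs (R := ℤ); simpa using this
  have hns : n ≤ s := by
    have h1 : (1 + ε) ^ (jstar - ((s-1:ℕ):ℤ)) ≤ (1 + ε) ^ j := by
      rw [← hlast]; exact hlow (s-1) (Nat.sub_le s 1)
    have h2 : jstar - ((s-1:ℕ):ℤ) ≤ j := (zpow_le_zpow_iff_right₀ h1ε').mp h1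
    rw [hsub] at h2
    have : jstar - j ≤ (s:ℤ) := by linarith
    omega
  -- reindex the geometric sum
  have hre : ∑ i ∈ Finset.Ico j jstar, (1 + ε) ^ i
      = ∑ k ∈ Finset.Icc 1 n, (1 + ε) ^ (jstar - (k:ℤ)) := by
    refine Finset.sum_nbij' (fun i => (jstar - i).toNat) (fun k => jstar - (k:ℤ))
      ?_ ?_ ?_ ?_ ?_
    · intro i hi
      simp only [Finset.mem_Ico] at hi
      simp only [Finset.mem_Icc, hn]
      omega
    · intro k hk
      simp only [Finset.mem_Icc, hn] at hk
      simp only [Finset.mem_Ico]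
      omega
    · intro i hi
      simp only [Finset.mem_Ico] at hi
      omega
    · intro k hk
      simp only [Finset.mem_Icc, hn] at hk
      omega
    · intro i hi
      simp only [Finset.mem_Ico] at hi
      congr 1
      omega
  rw [ge_iff_le, hre]
  calc ∑ k ∈ Finset.Icc 1 n, (1 + ε) ^ (jstar - (k:ℤ))
      ≤ ∑ k ∈ Finset.Icc 1 n, a k := by
        refine Finset.sum_le_sum ?_
        intro k hk
        simp only [Finset.mem_Icc] at hk
        exact hlow k (hk.2.trans hns)
    _ ≤ ∑ k ∈ Finset.Icc 1 s, a k := by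
        refine Finset.sum_le_sum_of_subset_of_nonneg ?_ ?_
        · exact Finset.Icc_subset_Icc_right hns
        · intro k hk _
          simp only [Finset.mem_Icc] at hk
          exact le_trans (le_of_lt (zpow_pos h1ε _)) (hlow k hk.2)
end
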